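/- Let 0 < A, λ, α < 1 with A ≠ λ^α, let B, R₀ ≥ 0, and let φ : [0,∞) → [0,∞) be an increasing function such that φ(λR) ≤ A φ(R) + B R^α for all R ≤ R₀. Then for every R ≤ R₀ and every r ≤ R: φ(r) ≤ (1/A) (r/R)^{min{log_λ A, α}} [ φ(R) + B R^α / |A − λ^α| ]. -/

import Mathlib

open MeasureTheory Set
open scoped ENNReal Topology

noncomputable section

/-- Points of the first Heisenberg group ℍ¹, identified with ℝ³ = ℝ × ℝ × ℝ;
a point `x` has coordinates `x₁ = x.1`, `x₂ = x.2.1`, `z = x.2.2`. -/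
abbrev H1 : Type := ℝ × ℝ × ℝ

/-- First horizontal vector field `X₁(x) = (1, 0, -x₂/2)`. -/
def X1vec (x : H1) : H1 := (1, 0, -x.2.1 / 2)

/-- Second horizontal vector field `X₂(x) = (0, 1, x₁/2)`. -/
def X2vec (x : H1) : H1 := (0, 1, x.1 / 2)

/-- Vertical vector field `T = ∂_z`. -/
def Tvec : H1 := (0, 0, 1)

/-- Horizontal derivative `X_i u (x)`: derivative of `u` at `x` in direction `X_i(x)`
(`i = 0` corresponds to `X₁`, `i = 1` to `X₂`). -/
def XD (i : Fin 2) (u : H1 → ℝ) (x : H1) : ℝ :=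
  fderiv ℝ u x (if i = 0 then X1vec x else X2vec x)

/-- Vertical derivative `T u`. -/
def TD (u : H1 → ℝ) (x : H1) : ℝ := fderiv ℝ u x Tvec

/-- Horizontal gradient `∇_H u = (X₁ u, X₂ u)`. -/
def horGrad (u : H1 → ℝ) (x : H1) : ℝ × ℝ := (XD 0 u x, XD 1 u x)

/-- Euclidean norm on ℝ². -/
def norm2 (z : ℝ × ℝ) : ℝ := Real.sqrt (z.1 ^ 2 + z.2 ^ 2)

/-- An admissible (absolutely continuous, subunit horizontal) curve on `[0,T]`:
there are coefficients `a, b` with `a² + b² ≤ 1` on `[0,T]` such that `Γ` is the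
integral of `t ↦ a t • X₁(Γ t) + b t • X₂(Γ t)`. -/
def IsHorizontalCurve (Γ : ℝ → H1) (T : ℝ) : Prop :=
  ∃ a b : ℝ → ℝ,
    (∀ t ∈ Icc (0:ℝ) T, a t ^ 2 + b t ^ 2 ≤ 1) ∧
    (∀ t ∈ Icc (0:ℝ) T,
      Γ t = Γ 0 + ∫ s in (0:ℝ)..t, (a s • X1vec (Γ s) + b s • X2vec (Γ s)))

/-- Carnot–Carathéodory distance on ℍ¹. -/
def dcc (x y : H1) : ℝ :=
  sInf {T : ℝ | 0 < T ∧ ∃ Γ : ℝ → H1, Γ 0 = x ∧ Γ T = y ∧ IsHorizontalCurve Γ T}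

/-- Open Carnot–Carathéodory ball of center `x` and radius `r`. -/
def ccBall (x : H1) (r : ℝ) : Set H1 := {y | dcc x y < r}

/-- `B ⊂⊂ Ω`: the closure of `B` is a compact subset of `Ω`. -/
def CompactlyContained (B Ω : Set H1) : Prop :=
  IsCompact (closure B) ∧ closure B ⊆ Ω

/-- Lebesgue measure of a set, as a real number. -/
def measReal (s : Set H1) : ℝ := (volume s).toReal

/-- Essential supremum of `f` on `s` (w.r.t. Lebesgue measure). -/
def essSupOn (f : H1 → ℝ) (s : Set H1) : ℝ := essSup f (volume.restrict s)

/-- Essential infimum of `f` on `s`. -/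
def essInfOn (f : H1 → ℝ) (s : Set H1) : ℝ := essInf f (volume.restrict s)

/-- Essential oscillation of `f` on `s`. -/
def oscOn (f : H1 → ℝ) (s : Set H1) : ℝ := essSupOn f s - essInfOn f s

/-- `L^∞` norm of `f` on `s`. -/
def linftyOn (f : H1 → ℝ) (s : Set H1) : ℝ := essSupOn (fun x => |f x|) s

/-- Test functions on `Ω`: smooth compactly supported with support inside `Ω`. -/
def IsTestFun (Ω : Set H1) (φ : H1 → ℝ) : Prop :=
  ContDiff ℝ (⊤ : ℕ∞) φ ∧ HasCompactSupport φ ∧ tsupport φ ⊆ Ω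

/-- `g = (g₁, g₂)` is the weak horizontal gradient of `f` on `Ω`. -/
def IsWeakHorGrad (Ω : Set H1) (f : H1 → ℝ) (g : H1 → ℝ × ℝ) : Prop :=
  ∀ φ : H1 → ℝ, IsTestFun Ω φ →
    (∫ x in Ω, f x * XD 0 φ x) = -∫ x in Ω, (g x).1 * φ x ∧
    (∫ x in Ω, f x * XD 1 φ x) = -∫ x in Ω, (g x).2 * φ x

/-- Local `L^p` membership on `Ω`. -/
def MemLocLp {E : Type*} [NormedAddCommGroup E] (p : ℝ≥0∞) (f : H1 → E) (Ω : Set H1) : Prop :=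
  ∀ K : Set H1, K ⊆ Ω → IsCompact K → MemLp f p (volume.restrict K)

/-- `a_i(z) = (δ² + |z|²)^{(p−2)/2} z_i` (`i = 0` is `a₁`, `i = 1` is `a₂`). -/
def aFun (δ p : ℝ) (i : Fin 2) (z : ℝ × ℝ) : ℝ :=
  (δ ^ 2 + z.1 ^ 2 + z.2 ^ 2) ^ ((p - 2) / 2) * (if i = 0 then z.1 else z.2)

/-- `∂_{z_j} a_i`. -/
def aDer (δ p : ℝ) (i j : Fin 2) (z : ℝ × ℝ) : ℝ :=
  fderiv ℝ (aFun δ p i) z (if j = 0 then ((1 : ℝ), (0 : ℝ)) else ((0 : ℝ), (1 : ℝ)))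

/-- `∂_{z_s} ∂_{z_j} a_i`. -/
def aDer2 (δ p : ℝ) (i j s : Fin 2) (z : ℝ × ℝ) : ℝ :=
  fderiv ℝ (aDer δ p i j) z (if s = 0 then ((1 : ℝ), (0 : ℝ)) else ((0 : ℝ), (1 : ℝ)))

/-- `u` is a pointwise solution of the non-degenerate `p`-Laplace equation
`X₁(a₁(∇_H u)) + X₂(a₂(∇_H u)) = 0` on `Ω`. -/
def IsPLaplaceSolution (δ p : ℝ) (Ω : Set H1) (u : H1 → ℝ) : Prop :=
  ∀ x ∈ Ω,
    XD 0 (fun y => aFun δ p 0 (horGrad u y)) x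
      + XD 1 (fun y => aFun δ p 1 (horGrad u y)) x = 0

/-- `w = δ² + |∇_H u|²`. -/
def wFun (δ : ℝ) (u : H1 → ℝ) (x : H1) : ℝ :=
  δ ^ 2 + (XD 0 u x) ^ 2 + (XD 1 u x) ^ 2

/-- `μ(R) = max_{l=1,2} ‖X_l u‖_{L^∞(B_R)}` for the ball centered at `x₀`. -/
def muMax (u : H1 → ℝ) (x₀ : H1) (R : ℝ) : ℝ :=
  max (linftyOn (XD 0 u) (ccBall x₀ R)) (linftyOn (XD 1 u) (ccBall x₀ R))

/-- Sup norm of a real function on ℍ¹. -/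
def supNorm (f : H1 → ℝ) : ℝ := ⨆ x : H1, |f x|

/-- Sup norm of `|∇_H ξ|`. -/
def supNormGrad (ξ : H1 → ℝ) : ℝ := ⨆ x : H1, norm2 (horGrad ξ x)

/-- Squared norm of the horizontal Hessian, `|∇²_H u|² = Σ_{i,j} (X_i X_j u)²`. -/
def hessSq (u : H1 → ℝ) (x : H1) : ℝ :=
  ∑ i : Fin 2, ∑ j : Fin 2, (XD i (XD j u) x) ^ 2

/-- Superlevel set `A⁺_{k,r}(f)` for the ball centered at `x₀`. -/
def supLevel (x₀ : H1) (f : H1 → ℝ) (k r : ℝ) : Set H1 :=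
  ccBall x₀ r ∩ {x | k < f x}

/-- Sublevel set `A⁻_{k,r}(f)` for the ball centered at `x₀`. -/
def subLevel (x₀ : H1) (f : H1 → ℝ) (k r : ℝ) : Set H1 :=
  ccBall x₀ r ∩ {x | f x < k}

/-- The `DG⁺(γ, χ, q)` inequality at level `h` for concentric radii `r' < r`,
for a function `f` with (weak) horizontal gradient `g`. -/
def DGIneq (x₀ : H1) (f : H1 → ℝ) (g : H1 → ℝ × ℝ) (γ χ q h r' r : ℝ) : Prop :=
  ∫ x in supLevel x₀ f h r', norm2 (g x) ^ 2 ≤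
    γ / (r - r') ^ 2 * (essSupOn (fun x => max (f x - h) 0) (ccBall x₀ r)) ^ 2
        * measReal (supLevel x₀ f h r)
      + χ * measReal (supLevel x₀ f h r) ^ (1 - 2 / q)

end

/-- iteration lemma for increasing functions `φ : [0,∞) → [0,∞)`. -/
theorem iteration_lemma (A lam α B R₀ : ℝ)
    (hA : 0 < A) (hA1 : A < 1) (hlam : 0 < lam) (hlam1 : lam < 1)
    (hα : 0 < α) (hα1 : α < 1) (hne : A ≠ lam ^ α) (hB : 0 ≤ B) (hR₀ : 0 ≤ R₀)
    (φ : ℝ → ℝ) (hφ0 : ∀ r, 0 ≤ r → 0 ≤ φ r) (hmono : MonotoneOn φ (Set.Ici (0:ℝ)))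
    (hiter : ∀ R, 0 ≤ R → R ≤ R₀ → φ (lam * R) ≤ A * φ R + B * R ^ α) :
    ∀ R, 0 ≤ R → R ≤ R₀ → ∀ r, 0 ≤ r → r ≤ R →
      φ r ≤ (1 / A) * (r / R) ^ min (Real.logb lam A) α *
        (φ R + B * R ^ α / |A - lam ^ α|) := by
  set L := lam ^ α with hLdef
  have hL0 : 0 < L := Real.rpow_pos_of_pos hlam α
  have hL1 : L < 1 := Real.rpow_lt_one hlam.le hlam1 hα
  have hALne : A - L ≠ 0 := sub_ne_zero.mpr hne
  set d := |A - L| with hddef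
  have hd : 0 < d := abs_pos.mpr hALne
  set M := max A L with hMdef
  have hM0 : 0 < M := lt_max_of_lt_left hA
  have hM1 : M < 1 := max_lt hA1 hL1
  have hAM : A ≤ M := le_max_left _ _
  set β := min (Real.logb lam A) α with hβdef
  have hlogb : 0 < Real.logb lam A := by
    rw [Real.logb, div_pos_iff]
    exact Or.inr ⟨Real.log_neg hA hA1, Real.log_neg hlam hlam1⟩
  have hβpos : 0 < β := lt_min hlogb hα
  have hlamβ : lam ^ β = M := by
    have hbase : lam ^ Real.logb lam A = A := Real.rpow_logb hlam hlam1.ne hA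
    rcases le_total (Real.logb lam A) α with h | h
    · have hLA : L ≤ A := by
        rw [← hbase]
        exact Real.rpow_le_rpow_of_exponent_ge hlam hlam1.le h
      rw [hβdef, min_eq_left h, hbase, hMdef, max_eq_left hLA]
    · have hAL : A ≤ L := by
        rw [← hbase]
        exact Real.rpow_le_rpow_of_exponent_ge hlam hlam1.le h
      rw [hβdef, min_eq_right h, hMdef, max_eq_right hAL]
  -- key induction
  have key : ∀ R, 0 ≤ R → R ≤ R₀ → ∀ k : ℕ,
      φ (lam ^ k * R) ≤ A ^ k * φ R + B * R ^ α * ((A ^ k - L ^ k) / (A - L)) := by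
    intro R hR0 hRR₀ k
    induction k with
    | zero => simp
    | succ k ih =>
      have hkR0 : 0 ≤ lam ^ k * R := by positivity
      have hk1 : lam ^ k ≤ 1 := pow_le_one₀ hlam.le hlam1.le
      have hkR : lam ^ k * R ≤ R₀ :=
        le_trans (mul_le_of_le_one_left hR0 hk1) hRR₀
      have hpow : (lam ^ k * R) ^ α = L ^ k * R ^ α := by
        rw [Real.mul_rpow (by positivity) hR0]
        congr 1
        rw [← Real.rpow_natCast lam k, ← Real.rpow_natCast L k, hLdef,
          ← Real.rpow_mul hlam.le, ← Real.rpow_mul hlam.le, mul_comm]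
      calc φ (lam ^ (k+1) * R) = φ (lam * (lam ^ k * R)) := by ring_nf
        _ ≤ A * φ (lam ^ k * R) + B * (lam ^ k * R) ^ α := hiter _ hkR0 hkR
        _ ≤ A * (A ^ k * φ R + B * R ^ α * ((A ^ k - L ^ k) / (A - L)))
              + B * (L ^ k * R ^ α) := by
            rw [hpow]; gcongr
        _ = A ^ (k+1) * φ R + B * R ^ α * ((A ^ (k+1) - L ^ (k+1)) / (A - L)) := by
            field_simp
            ring
  have hsum : ∀ k : ℕ, (A ^ k - L ^ k) / (A - L) ≤ M ^ k / d := by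
    intro k
    have hMk : A ^ k ≤ M ^ k := pow_le_pow_left₀ hA.le hAM k
    have hLk : L ^ k ≤ M ^ k := pow_le_pow_left₀ hL0.le (le_max_right _ _) k
    have hAk : (0:ℝ) ≤ A ^ k := by positivity
    have hLk0 : (0:ℝ) ≤ L ^ k := by positivity
    rcases lt_or_gt_of_ne hne with h | h
    · have hdeq : d = L - A := by rw [hddef, abs_of_neg (by linarith)]; ring
      have heq : (A ^ k - L ^ k) / (A - L) = (L ^ k - A ^ k) / (L - A) := by
        rw [← neg_div_neg_eq]; ring_nf
      rw [heq, hdeq]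
      exact (div_le_div_iff_of_pos_right (by linarith)).mpr (by linarith)
    · have hdeq : d = A - L := by rw [hddef, abs_of_pos (by linarith)]
      rw [hdeq]
      exact (div_le_div_iff_of_pos_right (by linarith)).mpr (by linarith)
  intro R hR0 hRR₀ r hr0 hrR
  have hC : 0 ≤ φ R + B * R ^ α / d :=
    add_nonneg (hφ0 R hR0) (div_nonneg (mul_nonneg hB (Real.rpow_nonneg hR0 α)) hd.le)
  rcases hr0.eq_or_lt with heq | hrpos
  · -- r = 0
    have hφ00 : φ 0 ≤ 0 := by
      have h := hiter 0 le_rfl hR₀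
      rw [mul_zero, Real.zero_rpow hα.ne', mul_zero, add_zero] at h
      by_contra hcon
      push_neg at hcon
      have := mul_lt_of_lt_one_left hcon hA1
      linarith
    rw [← heq, zero_div, Real.zero_rpow hβpos.ne', mul_zero, zero_mul]
    exact hφ00
  · have hR : 0 < R := lt_of_lt_of_le hrpos hrR
    have hrR1 : r / R ≤ 1 := (div_le_one hR).mpr hrR
    have hrRpos : 0 < r / R := div_pos hrpos hR
    have hex : ∃ n : ℕ, lam ^ n < r / R := exists_pow_lt_of_lt_one hrRpos hlam1
    set n₀ := Nat.find hex with hn₀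
    have hn₀spec : lam ^ n₀ < r / R := Nat.find_spec hex
    have hn₀ne : n₀ ≠ 0 := by
      intro h0
      rw [h0, pow_zero] at hn₀spec
      linarith
    obtain ⟨k, hk⟩ := Nat.exists_eq_succ_of_ne_zero hn₀ne
    have hlt : lam ^ (k+1) < r / R := by rw [← Nat.succ_eq_add_one, ← hk]; exact hn₀spec
    have hge : r / R ≤ lam ^ k := by
      have := Nat.find_min hex (by omega : k < n₀)
      linarith [not_lt.mp this]
    have hrle : r ≤ lam ^ k * R := by
      rw [div_le_iff₀ hR] at hge
      linarith
    have hkR0 : 0 ≤ lam ^ k * R := by positivity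
    have h1 : φ r ≤ φ (lam ^ k * R) :=
      hmono (Set.mem_Ici.mpr hr0) (Set.mem_Ici.mpr hkR0) hrle
    have h2 : φ (lam ^ k * R) ≤ M ^ k * (φ R + B * R ^ α / d) := by
      have hBRα : 0 ≤ B * R ^ α := mul_nonneg hB (Real.rpow_nonneg hR0 α)
      have hMk : A ^ k ≤ M ^ k := pow_le_pow_left₀ hA.le hAM k
      calc φ (lam ^ k * R) ≤ A ^ k * φ R + B * R ^ α * ((A ^ k - L ^ k) / (A - L)) :=
            key R hR0 hRR₀ k
        _ ≤ M ^ k * φ R + B * R ^ α * (M ^ k / d) :=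
            add_le_add (mul_le_mul_of_nonneg_right hMk (hφ0 R hR0))
              (mul_le_mul_of_nonneg_left (hsum k) hBRα)
        _ = M ^ k * (φ R + B * R ^ α / d) := by ring
    -- M^k ≤ (1/A) * (r/R)^β
    have hMnat : ∀ m : ℕ, (lam ^ m : ℝ) ^ β = M ^ m := by
      intro m
      rw [← hlamβ, ← Real.rpow_natCast lam m, ← Real.rpow_natCast (lam ^ β) m,
        ← Real.rpow_mul hlam.le, ← Real.rpow_mul hlam.le, mul_comm]
    have hMk1 : M ^ (k+1) ≤ (r / R) ^ β := by
      rw [← hMnat (k+1)]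
      exact Real.rpow_le_rpow (by positivity) hlt.le hβpos.le
    have h3 : M ^ k ≤ (r / R) ^ β / A := by
      rw [le_div_iff₀ hA]
      calc M ^ k * A ≤ M ^ k * M := by
            exact mul_le_mul_of_nonneg_left hAM (by positivity)
        _ = M ^ (k+1) := by ring
        _ ≤ (r / R) ^ β := hMk1
    calc φ r ≤ M ^ k * (φ R + B * R ^ α / d) := le_trans h1 h2
      _ ≤ ((r / R) ^ β / A) * (φ R + B * R ^ α / d) :=
          mul_le_mul_of_nonneg_right h3 hC
      _ = (1 / A) * (r / R) ^ β * (φ R + B * R ^ α / d) := by ring
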